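/- The term-rewriting system on words of generators of O, obtained by orienting the equations (γ then g ⇒ γg then γ′; composable pairs in O_{k−1} ⇒ their composite; composable pairs in O_k ⇒ their composite; identity then γ ⇒ γ) from left to right, is terminating: any reduction of a word with m morphisms of O_{k−1}, one face map, and j morphisms of O_k terminates in at most 2j + m steps. -/

import Mathlib

open CategoryTheory

/-- The data from which the category `O` of opetopes is presented: for each `k` the
category `O_k` of `k`-opetopes; for each `(k+1)`-opetope `α` a set `G k x α` of generating
face maps from each of its `(k-1)`-dimensional faces `x`; for each face map `γ : x → α`
and morphism `g : α ⟶ β` of `O_{k+1}` the unique restriction of `g` to the specified face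
(a `(k)`-morphism `x ⟶ y` together with the corresponding face map `y → β`); and the
identifications of faces where composition occurs, recorded as a relation `Ident` on
composable pairs of face maps mediated by an object-morphism `f : x ⟶ y`. -/
structure OpData where
  Obj : ℕ → Type
  [cat : ∀ k, SmallCategory (Obj k)]
  G : ∀ k, Obj k → Obj (k + 1) → Type
  restr : ∀ {k : ℕ} {x : Obj k} {α β : Obj (k + 1)},
    G k x α → (α ⟶ β) → Σ y : Obj k, (x ⟶ y) × G k y β
  Ident : ∀ {k : ℕ} {x y : Obj k} {α β : Obj (k + 1)} {θ : Obj (k + 2)},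
    G k x α → G (k + 1) α θ → G k y β → G (k + 1) β θ → (x ⟶ y) → Prop

attribute [instance] OpData.cat

/-- Objects of the category of opetopes: opetopes of all dimensions. -/
def OpData.TotalObj (D : OpData) : Type := Σ k, D.Obj k

/-- Generating morphisms of the category of opetopes: the morphisms of each `O_k`, and the
generating face maps. -/
inductive OpData.Gen (D : OpData) : D.TotalObj → D.TotalObj → Type
  | ofHom {k : ℕ} {a b : D.Obj k} : (a ⟶ b) → D.Gen ⟨k, a⟩ ⟨k, b⟩
  | face {k : ℕ} {x : D.Obj k} {α : D.Obj (k + 1)} : D.G k x α → D.Gen ⟨k, x⟩ ⟨k + 1, α⟩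

instance OpData.quiverTotal (D : OpData) : Quiver D.TotalObj := ⟨D.Gen⟩


/-- The basic rewriting rules, obtained by orienting the equations of the presentation of
`O` from left to right:  `γ` then `g` rewrites to `γg` then `γ'` (restriction); a
composable pair of morphisms of `O_k` rewrites to its composite; an identity followed by a
face map `γ` rewrites to `γ`. -/
inductive OpData.ORel (D : OpData) :
    ∀ {a b : Paths D.TotalObj}, (a ⟶ b) → (a ⟶ b) → Prop
  | r1 {k : ℕ} {x : D.Obj k} {α β : D.Obj (k + 1)} (γ : D.G k x α) (g : α ⟶ β) :
      OpData.ORel D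
        ((Quiver.Hom.toPath (OpData.Gen.face γ)).comp
          (Quiver.Hom.toPath (OpData.Gen.ofHom g)))
        ((Quiver.Hom.toPath (OpData.Gen.ofHom (D.restr γ g).2.1)).comp
          (Quiver.Hom.toPath (OpData.Gen.face (D.restr γ g).2.2)))
  | r2 {k : ℕ} {a b c : D.Obj k} (f : a ⟶ b) (g : b ⟶ c) :
      OpData.ORel D
        ((Quiver.Hom.toPath (OpData.Gen.ofHom f)).comp
          (Quiver.Hom.toPath (OpData.Gen.ofHom g)))
        (Quiver.Hom.toPath (OpData.Gen.ofHom (f ≫ g)))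
  | r3 {k : ℕ} {x : D.Obj k} {α : D.Obj (k + 1)} (γ : D.G k x α) :
      OpData.ORel D
        ((Quiver.Hom.toPath (OpData.Gen.ofHom (𝟙 x))).comp
          (Quiver.Hom.toPath (OpData.Gen.face γ)))
        (Quiver.Hom.toPath (OpData.Gen.face γ))

/-- One rewriting step: a basic rule applied anywhere inside a word of generators. -/
inductive OpData.Step (D : OpData) :
    ∀ {a b : Paths D.TotalObj}, (a ⟶ b) → (a ⟶ b) → Prop
  | mk {a b c d : Paths D.TotalObj} (p : a ⟶ b) {u v : b ⟶ c} (q : c ⟶ d)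
      (h : D.ORel u v) : OpData.Step D (p ≫ u ≫ q) (p ≫ v ≫ q)

/-- The weight of a generator relative to dimension `j`: `1` for a morphism of `O_j`,
`0` otherwise. -/
def OpData.genWt (D : OpData) (j : ℕ) : ∀ {a b : D.TotalObj}, D.Gen a b → ℕ
  | _, _, @OpData.Gen.ofHom _ k' _ _ _ => if k' = j then 1 else 0
  | _, _, @OpData.Gen.face _ _ _ _ _ => 0

/-- The number of generating morphisms of `O_j` occurring in a word of generators. -/
def OpData.countAt (D : OpData) (j : ℕ) :
    ∀ {a b : D.TotalObj}, Quiver.Path a b → ℕ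
  | _, _, Quiver.Path.nil => 0
  | _, _, Quiver.Path.cons p e => OpData.countAt D j p + D.genWt j e


namespace OpData

variable (D : OpData)

/-- Number of faces in a generator. -/
def genF : ∀ {a b : D.TotalObj}, D.Gen a b → ℕ
  | _, _, .ofHom _ => 0
  | _, _, .face _ => 1

/-- Number of homs in a generator. -/
def genH : ∀ {a b : D.TotalObj}, D.Gen a b → ℕ
  | _, _, .ofHom _ => 1
  | _, _, .face _ => 0

/-- Number of faces in a path. -/
def Fc : ∀ {a b : D.TotalObj}, Quiver.Path a b → ℕ
  | _, _, .nil => 0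
  | _, _, .cons p e => Fc p + D.genF e

/-- Number of homs in a path. -/
def Hc : ∀ {a b : D.TotalObj}, Quiver.Path a b → ℕ
  | _, _, .nil => 0
  | _, _, .cons p e => Hc p + D.genH e

/-- The termination measure: each hom counts `1` plus the number of faces to its left. -/
def Mw : ∀ {a b : D.TotalObj}, Quiver.Path a b → ℕ
  | _, _, .nil => 0
  | _, _, .cons p e => Mw p + D.genH e * (1 + D.Fc p)

lemma Fc_comp : ∀ {a b c : D.TotalObj} (p : Quiver.Path a b) (q : Quiver.Path b c),
    D.Fc (p.comp q) = D.Fc p + D.Fc q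
  | _, _, _, _, .nil => by simp [Quiver.Path.comp, Fc]
  | _, _, _, p, .cons q e => by
    simp only [Quiver.Path.comp, Fc, Fc_comp p q]; omega

lemma Hc_comp : ∀ {a b c : D.TotalObj} (p : Quiver.Path a b) (q : Quiver.Path b c),
    D.Hc (p.comp q) = D.Hc p + D.Hc q
  | _, _, _, _, .nil => by simp [Quiver.Path.comp, Hc]
  | _, _, _, p, .cons q e => by
    simp only [Quiver.Path.comp, Hc, Hc_comp p q]; omega

lemma Mw_comp : ∀ {a b c : D.TotalObj} (p : Quiver.Path a b) (q : Quiver.Path b c),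
    D.Mw (p.comp q) = D.Mw p + D.Mw q + D.Hc q * D.Fc p
  | _, _, _, _, .nil => by simp [Quiver.Path.comp, Mw, Hc]
  | _, _, _, p, .cons q e => by
    simp only [Quiver.Path.comp, Mw, Hc, Mw_comp p q]
    rw [D.Fc_comp p q]; ring

lemma Fc_nil' {a : D.TotalObj} : D.Fc (Quiver.Path.nil : Quiver.Path a a) = 0 := by
  simp only [Fc]

lemma Mw_nil' {a : D.TotalObj} : D.Mw (Quiver.Path.nil : Quiver.Path a a) = 0 := by
  simp only [Mw]

lemma cnt_nil' (j : ℕ) {a : D.TotalObj} :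
    D.countAt j (Quiver.Path.nil : Quiver.Path a a) = 0 := by
  simp only [countAt]

lemma Fc_cons' {a b c : D.TotalObj} (p : Quiver.Path a b) (e : D.Gen b c) :
    D.Fc (p.cons (e : b ⟶ c)) = D.Fc p + D.genF e := by
  simp only [Fc]

lemma Mw_cons' {a b c : D.TotalObj} (p : Quiver.Path a b) (e : D.Gen b c) :
    D.Mw (p.cons (e : b ⟶ c)) = D.Mw p + D.genH e * (1 + D.Fc p) := by
  simp only [Mw]

lemma cnt_cons' (j : ℕ) {a b c : D.TotalObj} (p : Quiver.Path a b) (e : D.Gen b c) :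
    D.countAt j (p.cons (e : b ⟶ c)) = D.countAt j p + D.genWt j e := by
  simp only [countAt]

lemma Fc_ofHom {a : D.TotalObj} {k : ℕ} {x y : D.Obj k} (p : Quiver.Path a ⟨k, x⟩)
    (f : x ⟶ y) : D.Fc (p.cons (Gen.ofHom f)) = D.Fc p :=
  D.Fc_cons' p _

lemma Fc_face {a : D.TotalObj} {k : ℕ} {x : D.Obj k} {α : D.Obj (k + 1)}
    (p : Quiver.Path a ⟨k, x⟩) (γ : D.G k x α) : D.Fc (p.cons (Gen.face γ)) = D.Fc p + 1 :=
  D.Fc_cons' p _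

lemma Mw_ofHom {a : D.TotalObj} {k : ℕ} {x y : D.Obj k} (p : Quiver.Path a ⟨k, x⟩)
    (f : x ⟶ y) : D.Mw (p.cons (Gen.ofHom f)) = D.Mw p + (1 + D.Fc p) :=
  (D.Mw_cons' p _).trans (congrArg (D.Mw p + ·) (Nat.one_mul _))

lemma Mw_face {a : D.TotalObj} {k : ℕ} {x : D.Obj k} {α : D.Obj (k + 1)}
    (p : Quiver.Path a ⟨k, x⟩) (γ : D.G k x α) : D.Mw (p.cons (Gen.face γ)) = D.Mw p :=
  (D.Mw_cons' p _).trans ((congrArg (D.Mw p + ·) (Nat.zero_mul _)).trans (Nat.add_zero _))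

lemma cnt_face (j : ℕ) {a : D.TotalObj} {k : ℕ} {x : D.Obj k} {α : D.Obj (k + 1)}
    (p : Quiver.Path a ⟨k, x⟩) (γ : D.G k x α) :
    D.countAt j (p.cons (Gen.face γ)) = D.countAt j p :=
  (D.cnt_cons' j p _).trans (Nat.add_zero _)

lemma cnt_ofHom_eq {a : D.TotalObj} {k : ℕ} {x y : D.Obj k} (p : Quiver.Path a ⟨k, x⟩)
    (f : x ⟶ y) : D.countAt k (p.cons (Gen.ofHom f)) = D.countAt k p + 1 :=
  (D.cnt_cons' k p _).trans (congrArg (D.countAt k p + ·) (if_pos rfl))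

lemma cnt_ofHom_ne (j : ℕ) {a : D.TotalObj} {k : ℕ} {x y : D.Obj k}
    (p : Quiver.Path a ⟨k, x⟩) (f : x ⟶ y) (h : k ≠ j) :
    D.countAt j (p.cons (Gen.ofHom f)) = D.countAt j p :=
  (D.cnt_cons' j p _).trans ((congrArg (D.countAt j p + ·) (if_neg h)).trans (Nat.add_zero _))

lemma Fc2 {a b c : D.TotalObj} (e1 : D.Gen a b) (e2 : D.Gen b c) :
    D.Fc ((Quiver.Hom.toPath (e1 : a ⟶ b)).comp (Quiver.Hom.toPath (e2 : b ⟶ c))) =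
      D.genF e1 + D.genF e2 := by
  simp only [Quiver.Hom.toPath, Quiver.Path.comp, Fc]; ring

lemma Fc1 {a b : D.TotalObj} (e1 : D.Gen a b) :
    D.Fc (Quiver.Hom.toPath (e1 : a ⟶ b)) = D.genF e1 := by
  simp only [Quiver.Hom.toPath, Fc]; ring

lemma Mw2 {a b c : D.TotalObj} (e1 : D.Gen a b) (e2 : D.Gen b c) :
    D.Mw ((Quiver.Hom.toPath (e1 : a ⟶ b)).comp (Quiver.Hom.toPath (e2 : b ⟶ c))) =
      D.genH e1 + D.genH e2 * (1 + D.genF e1) := by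
  simp only [Quiver.Hom.toPath, Quiver.Path.comp, Mw, Fc]; ring

lemma Mw1 {a b : D.TotalObj} (e1 : D.Gen a b) :
    D.Mw (Quiver.Hom.toPath (e1 : a ⟶ b)) = D.genH e1 := by
  simp only [Quiver.Hom.toPath, Mw, Fc]; ring

lemma Hc2 {a b c : D.TotalObj} (e1 : D.Gen a b) (e2 : D.Gen b c) :
    D.Hc ((Quiver.Hom.toPath (e1 : a ⟶ b)).comp (Quiver.Hom.toPath (e2 : b ⟶ c))) =
      D.genH e1 + D.genH e2 := by
  simp only [Quiver.Hom.toPath, Quiver.Path.comp, Hc]; ring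

lemma Hc1 {a b : D.TotalObj} (e1 : D.Gen a b) :
    D.Hc (Quiver.Hom.toPath (e1 : a ⟶ b)) = D.genH e1 := by
  simp only [Quiver.Hom.toPath, Hc]; ring

lemma meas_of {a b : D.TotalObj} {U V : Quiver.Path a b} (mu hu mv hv t : ℕ)
    (h1 : D.Mw U = mu) (h2 : D.Hc U = hu) (h3 : D.Mw V = mv) (h4 : D.Hc V = hv)
    (h : 1 + mv + hv * t ≤ mu + hu * t) : 1 + D.Mw V + D.Hc V * t ≤ D.Mw U + D.Hc U * t := by
  rw [h1, h2, h3, h4]; exact h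

lemma step_core {a b c d : D.TotalObj} (p : Quiver.Path a b) (u v : Quiver.Path b c)
    (q : Quiver.Path c d) (hF : D.Fc u = D.Fc v)
    (hm : 1 + D.Mw v + D.Hc v * D.Fc p ≤ D.Mw u + D.Hc u * D.Fc p) :
    1 + D.Mw (p.comp (v.comp q)) ≤ D.Mw (p.comp (u.comp q)) := by
  rw [Mw_comp, Mw_comp, Mw_comp, Mw_comp, Hc_comp, Hc_comp, hF]
  nlinarith [hm]

lemma fc_of {a b : D.TotalObj} {U V : Quiver.Path a b} (n : ℕ)
    (h1 : D.Fc U = n) (h2 : D.Fc V = n) : D.Fc U = D.Fc V := h1.trans h2.symm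

lemma orel_Fc {a b : Paths D.TotalObj} {u v : a ⟶ b} (h : D.ORel u v) :
    D.Fc u = D.Fc v := by
  cases h
  · exact D.fc_of 1 (D.Fc2 _ _) (D.Fc2 _ _)
  · exact D.fc_of 0 (D.Fc2 _ _) (D.Fc1 _)
  · exact D.fc_of 1 (D.Fc2 _ _) (D.Fc1 _)

lemma orel_measure {a b : Paths D.TotalObj} {u v : a ⟶ b} (h : D.ORel u v) (t : ℕ) :
    1 + D.Mw v + D.Hc v * t ≤ D.Mw u + D.Hc u * t := by
  cases h
  · exact D.meas_of 2 1 1 1 t (D.Mw2 _ _) (D.Hc2 _ _) (D.Mw2 _ _) (D.Hc2 _ _) (by omega)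
  · exact D.meas_of 2 2 1 1 t (D.Mw2 _ _) (D.Hc2 _ _) (D.Mw1 _) (D.Hc1 _) (by omega)
  · exact D.meas_of 1 1 0 0 t (D.Mw2 _ _) (D.Hc2 _ _) (D.Mw1 _) (D.Hc1 _) (by omega)

lemma step_measure {a b : Paths D.TotalObj} {u v : a ⟶ b} (h : D.Step u v) :
    1 + D.Mw v ≤ D.Mw u := by
  cases h with
  | mk p q h =>
    rename_i u v
    have e1 : (p ≫ u ≫ q) = Quiver.Path.comp p (Quiver.Path.comp u q) := rfl
    have e2 : (p ≫ v ≫ q) = Quiver.Path.comp p (Quiver.Path.comp v q) := rfl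
    have := D.orel_measure h (D.Fc p)
    exact D.step_core p u v q (D.orel_Fc h) this

lemma dim_le : ∀ {a b : D.TotalObj} (_ : Quiver.Path a b), a.1 ≤ b.1
  | _, _, .nil => le_refl _
  | _, _, .cons p e => by
    have h1 := dim_le p
    change D.Gen _ _ at e
    cases e with
    | ofHom f => exact h1
    | face γ => exact le_trans h1 (Nat.le_succ _)

lemma struct {k : ℕ} {x : D.Obj k} :
    ∀ {b : D.TotalObj} (p : @Quiver.Path D.TotalObj D.quiverTotal ⟨k, x⟩ b),
    (b.1 = k → D.Fc p = 0 ∧ D.Mw p = D.countAt k p ∧ D.countAt (k + 1) p = 0) ∧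
    (b.1 = k + 1 → D.Fc p = 1 ∧ D.Mw p = 2 * D.countAt (k + 1) p + D.countAt k p)
  | _, .nil => by
    constructor
    · intro _
      exact ⟨D.Fc_nil', D.Mw_nil'.trans (D.cnt_nil' k).symm, D.cnt_nil' (k + 1)⟩
    · intro h
      have h' : k = k + 1 := h
      omega
  | _, .cons p e => by
    have IH := struct p
    change D.Gen _ _ at e
    cases e with
    | @ofHom k' a a' f =>
      constructor
      · intro hb
        simp only at hb
        subst hb
        obtain ⟨h1, h2, h3⟩ := IH.1 rfl
        have c1 := D.Fc_ofHom p f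
        have c2 := D.Mw_ofHom p f
        have c3 := D.cnt_ofHom_eq p f
        have c4 := D.cnt_ofHom_ne (k' + 1) p f (by omega)
        omega
      · intro hb
        simp only at hb
        subst hb
        obtain ⟨h1, h2⟩ := IH.2 rfl
        have hne : ¬ (k + 1 = k) := by omega
        have c1 := D.Fc_ofHom p f
        have c2 := D.Mw_ofHom p f
        have c3 := D.cnt_ofHom_eq p f
        have c4 := D.cnt_ofHom_ne k p f hne
        omega
    | @face k' x' α' γ =>
      constructor
      · intro hb
        have hb' : k' + 1 = k := hb
        have h2 : k ≤ k' := D.dim_le p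
        omega
      · intro hb
        simp only at hb
        have hk : k' = k := by omega
        subst hk
        obtain ⟨h1, h2, h3⟩ := IH.1 rfl
        have c1 := D.Fc_face p γ
        have c2 := D.Mw_face p γ
        have c3 := D.cnt_face k' p γ
        have c4 := D.cnt_face (k' + 1) p γ
        omega

end OpData

/-- The term-rewriting system on words of generators of `O` is
terminating:  any reduction sequence starting from a word from a `k`-opetope `x` to a
`(k+1)`-opetope `α` containing `m` morphisms of `O_k`, one face map, and `j` morphisms of
`O_{k+1}` has length at most `2j + m`. -/
theorem rewriting_terminates (D : OpData) {k : ℕ} {x : D.Obj k} {α : D.Obj (k + 1)}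
    (n : ℕ) (w : ℕ → @Quiver.Path D.TotalObj (OpData.quiverTotal D) ⟨k, x⟩ ⟨k + 1, α⟩)
    (hw : ∀ i < n, D.Step (w i) (w (i + 1))) :
    n ≤ 2 * D.countAt (k + 1) (w 0) + D.countAt k (w 0) := by
  have key : ∀ i ≤ n, D.Mw (w i) + i ≤ D.Mw (w 0) := by
    intro i hi
    induction i with
    | zero => omega
    | succ j ihj =>
      have hstep := D.step_measure (hw j (by omega))
      have := ihj (by omega)
      omega
  have h0 := key n le_rfl
  have hs := (D.struct (w 0)).2 rfl
  omega
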